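/- Let p be an odd prime, m ≥ 2, and G a group of order 4·p^m. Then G has a unique (hence normal) Sylow p-subgroup, provided that G is generated by three involutions ρ₀, ρ₁, ρ₂. -/

import Mathlib

open Equiv Subgroup MulAction

set_option maxRecDepth 100000 in
private lemma perm4_mul_lemma :
    ∀ a b : Equiv.Perm (Fin 4), (a ^ 2 = 1 ∧ Equiv.Perm.sign a = 1) →
      (b ^ 2 = 1 ∧ Equiv.Perm.sign b = 1) →
      ((a * b) ^ 2 = 1 ∧ Equiv.Perm.sign (a * b) = 1) := by decide

theorem stmt_4 (p m : ℕ) (hp : p.Prime) (hodd : Odd p) (hm : 2 ≤ m)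
    {G : Type*} [Group G] [Finite G] (hG : Nat.card G = 4 * p ^ m)
    (ρ₀ ρ₁ ρ₂ : G) (h₀ : orderOf ρ₀ = 2) (h₁ : orderOf ρ₁ = 2) (h₂ : orderOf ρ₂ = 2)
    (hgen : Subgroup.closure {ρ₀, ρ₁, ρ₂} = ⊤) :
    (∀ P Q : Sylow p G, P = Q) ∧ (∀ P : Sylow p G, (P : Subgroup G).Normal) := by
  classical
  haveI hFp : Fact p.Prime := ⟨hp⟩
  have hp2 : p ≠ 2 := by rintro rfl; simp [Nat.odd_iff] at hodd
  have hp3 : 3 ≤ p := by have := hp.two_le; omega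
  have hndvd : ¬ p ∣ 4 := by
    intro h
    have h4 := Nat.le_of_dvd (by norm_num) h
    interval_cases p
    · exact absurd h (by norm_num)
    · exact absurd hp (by norm_num)
  have hfact : (Nat.card G).factorization p = m := by
    rw [hG, Nat.factorization_mul (by norm_num) (pow_ne_zero m hp.pos.ne'),
        Nat.Prime.factorization_pow hp]
    simp [Finsupp.add_apply, Nat.factorization_eq_zero_of_not_dvd hndvd]
  obtain ⟨P₀⟩ : Nonempty (Sylow p G) := inferInstance
  have hidx : (P₀ : Subgroup G).index = 4 := by
    have h := Subgroup.card_mul_index (P₀ : Subgroup G)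
    rw [Sylow.card_eq_multiplicity, hfact, hG, mul_comm 4 (p ^ m)] at h
    exact Nat.eq_of_mul_eq_mul_left (pow_pos hp.pos m) h
  have hdvd : Nat.card (Sylow p G) ∣ 4 := hidx ▸ Sylow.card_dvd_index P₀
  have hmod : Nat.card (Sylow p G) ≡ 1 [MOD p] := card_sylow_modEq_one p G
  have hn1 : Nat.card (Sylow p G) = 1 := by
    by_contra hne
    have hpos : 0 < Nat.card (Sylow p G) := Nat.card_pos
    have hn4 : Nat.card (Sylow p G) = 4 := by
      have hle := Nat.le_of_dvd (by norm_num) hdvd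
      have h2 : Nat.card (Sylow p G) ≠ 2 := by
        intro h
        rw [h] at hmod
        unfold Nat.ModEq at hmod
        rw [Nat.mod_eq_of_lt (by omega), Nat.mod_eq_of_lt (by omega)] at hmod
        omega
      generalize hN : Nat.card (Sylow p G) = N at hdvd hne hpos h2 hle
      interval_cases N <;> first | rfl | omega | (exact absurd hdvd (by norm_num))
    have hp3' : p = 3 := by
      by_contra hpne
      have h5 : 5 ≤ p := by
        rcases Nat.lt_or_ge p 5 with h | h
        · interval_cases p
          · exact absurd rfl hpne
          · exact absurd hp (by norm_num)
        · exact h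
      rw [hn4] at hmod
      unfold Nat.ModEq at hmod
      rw [Nat.mod_eq_of_lt (by omega), Nat.mod_eq_of_lt (by omega)] at hmod
      omega
    subst hp3'
    -- Conjugation action on the 4 Sylow 3-subgroups
    set φ := MulAction.toPermHom G (Sylow 3 G) with hφ
    have hKle : φ.ker ≤ MulAction.stabilizer G P₀ := by
      intro g hg
      have h1 : φ g = 1 := hg
      show g • P₀ = P₀
      have : φ g P₀ = P₀ := by rw [h1]; rfl
      exact this
    have h4r : 4 ∣ φ.ker.index := by
      have hstab : (MulAction.stabilizer G P₀).index = 4 := by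
        rw [MulAction.index_stabilizer_of_transitive, hn4]
      exact hstab ▸ Subgroup.index_dvd_of_le hKle
    haveI := Fintype.ofFinite (Sylow 3 G)
    have hc4 : Fintype.card (Sylow 3 G) = 4 := by
      rw [← Nat.card_eq_fintype_card]; exact hn4
    have h24 : Nat.card (Equiv.Perm (Sylow 3 G)) = 24 := by
      rw [Nat.card_eq_fintype_card, Fintype.card_perm, hc4]
      norm_num [Nat.factorial]
    have hr24 : φ.ker.index ∣ 24 := by
      rw [Subgroup.index_ker]
      exact h24 ▸ Subgroup.card_subgroup_dvd_card φ.range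
    have hrG : φ.ker.index ∣ 4 * 3 ^ m := hG ▸ Subgroup.index_dvd_card φ.ker
    have hr12 : φ.ker.index ∣ 12 := by
      obtain ⟨k, rfl⟩ : ∃ k, m = k + 1 := ⟨m - 1, by omega⟩
      have h2 : (4 : ℕ) * 3 ^ (k + 1) = 12 * 3 ^ k := by ring
      rw [h2] at hrG
      have hgcd : Nat.gcd 24 (12 * 3 ^ k) = 12 := by
        have h24' : (24 : ℕ) = 12 * 2 := by norm_num
        rw [h24', Nat.gcd_mul_left]
        have : Nat.gcd 2 (3 ^ k) = 1 := Nat.Coprime.pow_right k (by decide)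
        rw [this, mul_one]
      exact hgcd ▸ Nat.dvd_gcd hr24 hrG
    have h0 : φ.ker.index ≠ 0 := Subgroup.index_ne_zero_of_finite
    have hrcase : φ.ker.index = 4 ∨ φ.ker.index = 12 := by
      have hle : φ.ker.index ≤ 12 := Nat.le_of_dvd (by norm_num) hr12
      generalize hN : φ.ker.index = r at h4r hr12 h0 hle
      interval_cases r <;> omega
    rcases hrcase with hr | hr
    · -- kernel is a normal Sylow 3-subgroup: contradiction with 4 Sylows
      have hcardK : Nat.card φ.ker = 3 ^ ((Nat.card G).factorization 3) := by
        have h := Subgroup.card_mul_index φ.ker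
        rw [hr, hG] at h
        rw [hfact]
        have h' : Nat.card φ.ker * 4 = 3 ^ m * 4 := by omega
        exact Nat.eq_of_mul_eq_mul_right (by norm_num) h'
      have hPKnormal : ((Sylow.ofCard φ.ker hcardK : Sylow 3 G) : Subgroup G).Normal :=
        MonoidHom.normal_ker φ
      haveI := Sylow.unique_of_normal _ hPKnormal
      have : Nat.card (Sylow 3 G) = 1 := Nat.card_unique
      omega
    · -- image has order 12 in S₄, hence is A₄, but generated by involutions
      let e : Sylow 3 G ≃ Fin 4 := Fintype.equivFinOfCardEq hc4
      let ψ : Equiv.Perm (Sylow 3 G) →* Equiv.Perm (Fin 4) :=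
        { toFun := fun σ => e.permCongr σ
          map_one' := by ext x; simp
          map_mul' := by intro a b; ext x; simp }
      have hψinj : Function.Injective ψ := fun a b h => e.permCongr.injective h
      set φ' : G →* Equiv.Perm (Fin 4) := ψ.comp φ with hφ'
      have hker' : φ'.ker = φ.ker := by
        ext g
        simp only [MonoidHom.mem_ker, hφ', MonoidHom.comp_apply]
        exact ⟨fun h => hψinj (h.trans (map_one ψ).symm), fun h => by rw [h, map_one]⟩
      set Q := φ'.range with hQ
      have hcardQ : Nat.card Q = 12 := by
        rw [← Subgroup.index_ker, hker', hr]
      have h24' : Nat.card (Equiv.Perm (Fin 4)) = 24 := by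
        rw [Nat.card_eq_fintype_card, Fintype.card_perm]
        norm_num [Nat.factorial]
      have hQ2 : Q.index = 2 := by
        have h := Subgroup.card_mul_index Q
        rw [hcardQ, h24'] at h
        omega
      -- alternating group is contained in Q
      have hA : alternatingGroup (Fin 4) ≤ Q := by
        rw [← Equiv.Perm.closure_three_cycles_eq_alternating]
        refine (Subgroup.closure_le Q).mpr ?_
        intro σ hσ
        have h3 : σ ^ 3 = 1 := by
          have ho := (hσ : σ.IsThreeCycle).orderOf
          rw [← ho]; exact pow_orderOf_eq_one σ
        have hσQ : (σ ^ 2) ^ 2 ∈ Q := Subgroup.sq_mem_of_index_two hQ2 (σ ^ 2)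
        have : (σ ^ 2) ^ 2 = σ := by
          rw [← pow_mul]
          norm_num
          calc σ ^ 4 = σ ^ 3 * σ := by rw [← pow_succ]
          _ = σ := by rw [h3, one_mul]
        rwa [this] at hσQ
      have hQA : Q = alternatingGroup (Fin 4) := by
        refine (Subgroup.eq_of_le_of_card_ge hA ?_).symm
        have hcA : Nat.card (alternatingGroup (Fin 4)) = 12 := by
          have h24f : Fintype.card (Equiv.Perm (Fin 4)) = 24 := by
            rw [Fintype.card_perm]; rfl
          have h := two_mul_card_alternatingGroup (α := Fin 4)
          rw [h24f] at h
          rw [Nat.card_eq_fintype_card]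
          omega
        rw [hcA, hcardQ]
      -- the explicit Klein four group
      let V : Subgroup (Equiv.Perm (Fin 4)) :=
        { carrier := {σ | σ ^ 2 = 1 ∧ Equiv.Perm.sign σ = 1}
          one_mem' := by constructor <;> simp
          mul_mem' := fun ha hb => perm4_mul_lemma _ _ ha hb
          inv_mem' := by
            rintro a ⟨ha1, ha2⟩
            have hinv : a⁻¹ = a := by
              rw [pow_two] at ha1
              exact inv_eq_of_mul_eq_one_right ha1
            rw [hinv]; exact ⟨ha1, ha2⟩ }
      have hQV : Q ≤ V := by
        have hQc : Q = Subgroup.closure ((φ' : G → Equiv.Perm (Fin 4)) '' {ρ₀, ρ₁, ρ₂}) := by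
          rw [← MonoidHom.map_closure, hgen, ← MonoidHom.range_eq_map]
        rw [hQc]
        refine (Subgroup.closure_le V).mpr ?_
        rintro σ ⟨g, hg, rfl⟩
        have hgQ : φ' g ∈ Q := ⟨g, rfl⟩
        have hA4 : φ' g ∈ alternatingGroup (Fin 4) := hQA ▸ hgQ
        have hsq : (φ' g) ^ 2 = 1 := by
          rcases hg with rfl | rfl | rfl <;>
            · rw [← map_pow]
              first
              | rw [show g ^ 2 = 1 by rw [← h₀]; exact pow_orderOf_eq_one g]
              | rw [show g ^ 2 = 1 by rw [← h₁]; exact pow_orderOf_eq_one g]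
              | rw [show g ^ 2 = 1 by rw [← h₂]; exact pow_orderOf_eq_one g]
              exact map_one φ'
        exact ⟨hsq, Equiv.Perm.mem_alternatingGroup.mp hA4⟩
      -- a 3-cycle lies in A₄ = Q ≤ V but has order 3: contradiction
      set c : Equiv.Perm (Fin 4) := Equiv.swap 0 1 * Equiv.swap 0 2 with hc
      have hcA : c ∈ alternatingGroup (Fin 4) := by
        rw [Equiv.Perm.mem_alternatingGroup]; decide
      have hcV : c ∈ V := hQV (hQA ▸ hcA)
      have : c ^ 2 = 1 := hcV.1
      exact absurd this (by decide)
  -- conclude from uniqueness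
  have hsub : Subsingleton (Sylow p G) := by
    rcases Nat.card_eq_one_iff_unique.mp hn1 with ⟨h, _⟩
    exact h
  refine ⟨fun P Q => Subsingleton.elim P Q, fun P => ?_⟩
  have hst : MulAction.stabilizer G P = ⊤ := by
    ext g
    simp only [Subgroup.mem_top, iff_true, MulAction.mem_stabilizer_iff]
    exact Subsingleton.elim _ _
  rw [Sylow.stabilizer_eq_normalizer] at hst
  exact Subgroup.normalizer_eq_top_iff.mp hst
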